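/- Let A be a unital complex Banach algebra with ‖1‖ = 1 and h ∈ A. If ‖h + i·t·1‖² ≤ ‖h‖² + t² for all real t, then h is hermitian, i.e., ρ(h) ∈ ℝ for every state ρ. -/

import Mathlib

/-- A state on a unital Banach algebra: a continuous linear functional `ρ`
with `‖ρ‖ = 1` and `ρ 1 = 1`. -/
def IsState {A : Type*} [NormedRing A] [NormedAlgebra ℂ A] (ρ : A →L[ℂ] ℂ) : Prop :=
  ‖ρ‖ = 1 ∧ ρ 1 = 1

/-- An element is dissipative if `Re ρ(a) ≤ 0` for all states `ρ`. -/
def IsDissipative {A : Type*} [NormedRing A] [NormedAlgebra ℂ A] (a : A) : Prop :=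
  ∀ ρ : A →L[ℂ] ℂ, IsState ρ → (ρ a).re ≤ 0

/-- An element is hermitian if `ρ(h) ∈ ℝ` for all states `ρ`. -/
def IsHermitianElt {A : Type*} [NormedRing A] [NormedAlgebra ℂ A] (h : A) : Prop :=
  ∀ ρ : A →L[ℂ] ℂ, IsState ρ → (ρ h).im = 0

theorem stmt11 {A : Type*} [NormedRing A] [NormedAlgebra ℂ A] [NormOneClass A]
    [CompleteSpace A] (h : A)
    (hyp : ∀ t : ℝ, ‖h + (Complex.I * t) • 1‖ ^ 2 ≤ ‖h‖ ^ 2 + t ^ 2) :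
    IsHermitianElt h := by
  intro ρ hρ
  -- key estimate: for all t, (ρ h + i t) bounded
  have key : ∀ t : ℝ, ((ρ h).re)^2 + ((ρ h).im + t)^2 ≤ ‖h‖^2 + t^2 := by
    intro t
    have h1 : ρ (h + (Complex.I * t) • 1) = ρ h + Complex.I * t := by
      rw [map_add, map_smul, hρ.2, smul_eq_mul, mul_one]
    have h2 : ‖ρ (h + (Complex.I * t) • 1)‖ ≤ ‖h + (Complex.I * t) • 1‖ := by
      calc ‖ρ (h + (Complex.I * t) • 1)‖ ≤ ‖ρ‖ * ‖h + (Complex.I * t) • 1‖ :=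
            ρ.le_opNorm _
        _ = ‖h + (Complex.I * t) • 1‖ := by rw [hρ.1, one_mul]
    have h3 : ‖ρ h + Complex.I * t‖^2 ≤ ‖h‖^2 + t^2 := by
      rw [← h1]
      calc ‖ρ (h + (Complex.I * t) • 1)‖^2 ≤ ‖h + (Complex.I * t) • 1‖^2 := by
            apply pow_le_pow_left₀ (norm_nonneg _) h2
        _ ≤ ‖h‖^2 + t^2 := hyp t
    have h4 : ‖ρ h + Complex.I * t‖^2 = ((ρ h).re)^2 + ((ρ h).im + t)^2 := by
      rw [Complex.sq_norm, Complex.normSq_apply]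
      simp [Complex.add_re, Complex.add_im, Complex.mul_re, Complex.mul_im]
      ring
    rw [h4] at h3
    exact h3
  set y := (ρ h).im with hy
  by_contra hne
  have hy2 : (2 * y) ≠ 0 := by simpa using hne
  have := key ((‖h‖^2 + 1) / (2 * y))
  nlinarith [sq_nonneg ((ρ h).re), sq_nonneg y, div_mul_cancel₀ (‖h‖^2 + 1) hy2]
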